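/- Let λ_0 ≥ … ≥ λ_{N-1} be the eigenvalues of H_W^N, lying in [0,1], with ∑_{k=0}^{N-1} λ_k = 2NW and ∑_{k=0}^{N-1} λ_k(1-λ_k) ≤ C log N. Set K = ⌊2NW⌋ with K ≥ 1. Then |K - ∑_{k=0}^{K-1} λ_k| ≤ C' (log N + 1) for an absolute constant C' depending only on C; equivalently |1 - (1/K)∑_{k=0}^{K-1} λ_k| ≲ (log N)/K. -/

import Mathlib

open Real Finset

/-- Purely finite-dimensional eigenvalue-profile statement: if
`1 ≥ λ_0 ≥ … ≥ λ_{N-1} ≥ 0`, `∑_{k<N} λ_k = 2NW`, and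
`∑_{k<N} λ_k(1-λ_k) ≤ C log N`, then with `K = ⌊2NW⌋ ≥ 1` one has
`|K - ∑_{k<K} λ_k| ≤ C' (log N + 1)` with `C'` depending only on `C`. -/
theorem partial_eigenvalue_sum_bound (C : ℝ) (hC : 0 < C) :
    ∃ C' : ℝ, 0 < C' ∧ ∀ (N : ℕ), 2 ≤ N → ∀ W : ℝ, W ∈ Set.Ioo (0:ℝ) (1/2) →
      ∀ lam : ℕ → ℝ,
      (∀ k, k < N → 0 ≤ lam k ∧ lam k ≤ 1) →
      (∀ j k, j ≤ k → k < N → lam k ≤ lam j) →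
      (∑ k ∈ Finset.range N, lam k) = 2 * N * W →
      (∑ k ∈ Finset.range N, lam k * (1 - lam k)) ≤ C * Real.log N →
      ∀ K : ℕ, K = ⌊2 * (N : ℝ) * W⌋₊ → 1 ≤ K →
        |(K : ℝ) - ∑ k ∈ Finset.range K, lam k| ≤ C' * (Real.log N + 1) := by
  refine ⟨2 * C, by positivity, ?_⟩
  intro N hN W hW lam hbd hmono hsum hvar K hK hK1
  obtain ⟨hW0, hW2⟩ := hW
  have hNpos : (0:ℝ) < N := by positivity
  have h2NW : (0:ℝ) ≤ 2 * N * W := by positivity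
  have hKle : (K:ℝ) ≤ 2 * N * W := by rw [hK]; exact Nat.floor_le h2NW
  have hKN : K < N := by
    have : (K:ℝ) < N := lt_of_le_of_lt hKle (by nlinarith)
    exact_mod_cast this
  have hlogN : 0 ≤ Real.log N := Real.log_nonneg (by exact_mod_cast hN.trans' (by norm_num))
  -- each term of the variance sum is nonneg
  have hterm : ∀ k ∈ Finset.range N, 0 ≤ lam k * (1 - lam k) := by
    intro k hk
    rw [Finset.mem_range] at hk
    obtain ⟨h0, h1⟩ := hbd k hk
    nlinarith
  -- the quantity is nonneg
  have hsumK_le : ∑ k ∈ Finset.range K, lam k ≤ K := by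
    calc ∑ k ∈ Finset.range K, lam k ≤ ∑ k ∈ Finset.range K, (1:ℝ) := by
          refine Finset.sum_le_sum fun k hk => ?_
          rw [Finset.mem_range] at hk
          exact (hbd k (hk.trans hKN)).2
      _ = K := by simp
  rw [abs_of_nonneg (by linarith)]
  have hfinal : (K:ℝ) - ∑ k ∈ Finset.range K, lam k ≤ 2 * C * Real.log N := by
    by_cases h : ∀ k < K, (1:ℝ)/2 ≤ lam k
    · -- head deficit bounded
      have : (K:ℝ) - ∑ k ∈ Finset.range K, lam k
          = ∑ k ∈ Finset.range K, (1 - lam k) := by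
        rw [Finset.sum_sub_distrib]
        simp
      rw [this]
      calc ∑ k ∈ Finset.range K, (1 - lam k)
          ≤ ∑ k ∈ Finset.range K, 2 * (lam k * (1 - lam k)) := by
            refine Finset.sum_le_sum fun k hk => ?_
            rw [Finset.mem_range] at hk
            have h2 := h k hk
            have h1 := (hbd k (hk.trans hKN)).2
            nlinarith
        _ = 2 * ∑ k ∈ Finset.range K, lam k * (1 - lam k) := by
            rw [Finset.mul_sum]
        _ ≤ 2 * ∑ k ∈ Finset.range N, lam k * (1 - lam k) := by
            have := Finset.sum_le_sum_of_subset_of_nonneg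
              (Finset.range_subset_range.mpr hKN.le) (fun k hk _ => hterm k hk)
            linarith
        _ ≤ 2 * (C * Real.log N) := by linarith
        _ = 2 * C * Real.log N := by ring
    · -- tail mass bounded
      push_neg at h
      obtain ⟨k0, hk0K, hk0⟩ := h
      have hsplit : ∑ k ∈ Finset.range N, lam k
          = ∑ k ∈ Finset.range K, lam k + ∑ k ∈ Finset.Ico K N, lam k := by
        rw [Finset.range_eq_Ico, ← Finset.sum_Ico_consecutive _ (Nat.zero_le K) hKN.le, Finset.range_eq_Ico]
      have htail : ∑ k ∈ Finset.Ico K N, lam k ≤ 2 * C * Real.log N := by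
        calc ∑ k ∈ Finset.Ico K N, lam k
            ≤ ∑ k ∈ Finset.Ico K N, 2 * (lam k * (1 - lam k)) := by
              refine Finset.sum_le_sum fun k hk => ?_
              rw [Finset.mem_Ico] at hk
              have hle : lam k ≤ lam k0 := hmono k0 k (hk0K.le.trans hk.1) hk.2
              have h0 := (hbd k hk.2).1
              nlinarith
          _ = 2 * ∑ k ∈ Finset.Ico K N, lam k * (1 - lam k) := by
              rw [Finset.mul_sum]
          _ ≤ 2 * ∑ k ∈ Finset.range N, lam k * (1 - lam k) := by
              have := Finset.sum_le_sum_of_subset_of_nonneg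
                (show Finset.Ico K N ⊆ Finset.range N by
                  rw [Finset.range_eq_Ico]; exact Finset.Ico_subset_Ico (Nat.zero_le K) le_rfl)
                (fun k hk _ => hterm k hk)
              linarith
          _ ≤ 2 * (C * Real.log N) := by linarith
          _ = 2 * C * Real.log N := by ring
      have : ∑ k ∈ Finset.range K, lam k + ∑ k ∈ Finset.Ico K N, lam k = 2 * N * W := by
        rw [← hsplit]; exact hsum
      linarith
  nlinarith
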